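/- Let X be a metric space with topological (covering) dimension n and finite Assouad dimension dim_A(X). Then n ≤ dim_A(X). -/

import Mathlib

open Metric Set MeasureTheory Filter
open scoped ENNReal NNReal Topology

/-- The topological (covering) dimension of `X` is at most `n`. -/
def CovDimLE (X : Type*) [TopologicalSpace X] (n : ℕ) : Prop :=
  ∀ (ι : Type) (U : ι → Set X), (∀ i, IsOpen (U i)) → (⋃ i, U i) = univ →
    ∃ (κ : Type) (V : κ → Set X), (∀ k, IsOpen (V k)) ∧ (⋃ k, V k) = univ ∧
      (∀ k, ∃ i, V k ⊆ U i) ∧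
      ∀ x : X, {k | x ∈ V k}.Finite ∧ {k | x ∈ V k}.ncard ≤ n + 1

/-- The set of admissible Assouad exponents of a metric space `X`: all `s ≥ 0` for which
some `C ≥ 0` bounds the cardinality of every `α`-separated subset of every closed `β`-ball
by `C (β/α)^s`. The Assouad dimension is the infimum of this set. -/
def AssouadExponents (X : Type*) [MetricSpace X] : Set ℝ :=
  {s : ℝ | 0 ≤ s ∧ ∃ C : ℝ, 0 ≤ C ∧
    ∀ α β : ℝ, 0 < α → α ≤ β → ∀ (x : X) (V : Finset X),
      (∀ v ∈ V, v ∈ closedBall x β) →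
      (∀ u ∈ V, ∀ v ∈ V, u ≠ v → α ≤ dist u v) →
      (V.card : ℝ) ≤ C * (β / α) ^ s}

/- ---------------- Auxiliary material ---------------- -/

section Aux

universe u

/-- A set all of whose finite subsets have cardinality at most `m` is finite with
`ncard` at most `m`. -/
lemma aux_finite_ncard {γ : Type*} (S : Set γ) (m : ℕ)
    (h : ∀ T : Finset γ, ↑T ⊆ S → T.card ≤ m) : S.Finite ∧ S.ncard ≤ m := by
  have hfin : S.Finite := by
    by_contra hinf
    obtain ⟨T, hTs, hTc⟩ := Set.Infinite.exists_subset_card_eq hinf (m + 1)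
    have := h T hTs
    omega
  refine ⟨hfin, ?_⟩
  have := h hfin.toFinset (by simp)
  rwa [← Set.ncard_coe_finset hfin.toFinset, Set.Finite.coe_toFinset] at this

lemma aux_subsingleton_ncard {γ : Type*} {S : Set γ} (h : S.Subsingleton) :
    S.Finite ∧ S.ncard ≤ 1 := by
  rcases h.eq_empty_or_singleton with rfl | ⟨a, rfl⟩ <;> simp

/-- Existence of a maximal `α`-separated subset of `A`; it is automatically an `α`-net. -/
lemma exists_maximal_separated {X : Type u} [MetricSpace X] (A : Set X) (α : ℝ) (hα : 0 < α) :
    ∃ M, M ⊆ A ∧ (∀ u ∈ M, ∀ v ∈ M, u ≠ v → α ≤ dist u v) ∧ A ⊆ ⋃ p ∈ M, ball p α := by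
  set S : Set (Set X) := {M | M ⊆ A ∧ ∀ u ∈ M, ∀ v ∈ M, u ≠ v → α ≤ dist u v} with hS
  obtain ⟨M, hM⟩ : ∃ M, Maximal (· ∈ S) M := by
    apply zorn_subset
    intro c hc hchain
    refine ⟨⋃₀ c, ⟨?_, ?_⟩, fun s hs => subset_sUnion_of_mem hs⟩
    · exact sUnion_subset fun s hs => (hc hs).1
    · rintro u hu v hv huv
      obtain ⟨s1, hs1, hu1⟩ := hu
      obtain ⟨s2, hs2, hv2⟩ := hv
      rcases hchain.total hs1 hs2 with h12 | h21
      · exact (hc hs2).2 u (h12 hu1) v hv2 huv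
      · exact (hc hs1).2 u hu1 v (h21 hv2) huv
  refine ⟨M, hM.prop.1, hM.prop.2, ?_⟩
  intro a ha
  by_contra hnot
  have hsep : ∀ p ∈ M, α ≤ dist a p := by
    intro p hp
    by_contra hlt
    exact hnot (mem_biUnion hp (by simpa [mem_ball, dist_comm] using not_le.mp hlt))
  have hins : insert a M ∈ S := by
    constructor
    · exact insert_subset ha hM.prop.1
    · rintro u (rfl | hu) v (rfl | hv) huv
      · exact absurd rfl huv
      · exact hsep v hv
      · rw [dist_comm]; exact hsep u hu
      · exact hM.prop.2 u hu v hv huv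
  have : a ∈ M := hM.2 hins (subset_insert a M) (mem_insert a M)
  exact hnot (mem_biUnion this (by simp [mem_ball, hα]))

variable {X : Type u} [MetricSpace X] [MeasurableSpace X] [BorelSpace X] {s C : ℝ}

/-- Abbreviation for the Assouad counting hypothesis. -/
def AssouadCnt (X : Type u) [MetricSpace X] (s C : ℝ) : Prop :=
  ∀ α β : ℝ, 0 < α → α ≤ β → ∀ (x : X) (V : Finset X),
      (∀ v ∈ V, v ∈ closedBall x β) →
      (∀ u ∈ V, ∀ v ∈ V, u ≠ v → α ≤ dist u v) →
      (V.card : ℝ) ≤ C * (β / α) ^ s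

lemma sep_finite (hcnt : AssouadCnt X s C) {α β : ℝ} (hα : 0 < α) (hαβ : α ≤ β) (x : X)
    {M : Set X} (hM : M ⊆ closedBall x β)
    (hsep : ∀ u ∈ M, ∀ v ∈ M, u ≠ v → α ≤ dist u v) :
    M.Finite ∧ ∀ T : Finset X, ↑T ⊆ M → (T.card : ℝ) ≤ C * (β / α) ^ s := by
  have hb : ∀ T : Finset X, ↑T ⊆ M → (T.card : ℝ) ≤ C * (β / α) ^ s := by
    intro T hT
    exact hcnt α β hα hαβ x T (fun v hv => hM (hT hv))
      (fun u hu v hv huv => hsep u (hT hu) v (hT hv) huv)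
  refine ⟨?_, hb⟩
  by_contra hinf
  obtain ⟨T, hTs, hTc⟩ := Set.Infinite.exists_subset_card_eq hinf
    (⌊C * (β / α) ^ s⌋₊ + 1)
  have h1 := hb T hTs
  have h2 : (C * (β / α) ^ s) < ((⌊C * (β / α) ^ s⌋₊ : ℝ) + 1) := Nat.lt_floor_add_one _
  rw [hTc] at h1
  push_cast at h1
  linarith

lemma ball_null (hcnt : AssouadCnt X s C) (hC : 0 ≤ C) {d : ℝ} (hs0 : 0 ≤ s) (hd : s < d) (x₀ : X) (β : ℝ) :
    μH[d] (closedBall x₀ β) = 0 := by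
  have hd0 : 0 < d := lt_of_le_of_lt hs0 hd
  rcases lt_trichotomy β 0 with hβ | hβ | hβ
  · rw [closedBall_eq_empty.mpr hβ]; exact measure_empty
  · subst hβ
    rw [closedBall_zero]
    haveI := MeasureTheory.Measure.noAtoms_hausdorff X hd0
    exact measure_singleton _
  · set q : ℝ := 2⁻¹ with hq
    set α : ℕ → ℝ := fun k => β * q ^ k with hα
    have hαpos : ∀ k, 0 < α k := fun k => mul_pos hβ (pow_pos (by norm_num) k)
    have hαle : ∀ k, α k ≤ β := by
      intro k
      have h1 : q ^ k ≤ 1 := pow_le_one₀ (by norm_num) (by norm_num)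
      calc β * q ^ k ≤ β * 1 := by
            exact mul_le_mul_of_nonneg_left h1 (le_of_lt hβ)
        _ = β := mul_one β
    have hMex : ∀ k : ℕ, ∃ M : Set X, M ⊆ closedBall x₀ β ∧
        (∀ u ∈ M, ∀ v ∈ M, u ≠ v → α k ≤ dist u v) ∧
        (closedBall x₀ β ⊆ ⋃ p ∈ M, ball p (α k)) ∧ M.Finite := by
      intro k
      obtain ⟨M, h1, h2, h3⟩ := exists_maximal_separated (closedBall x₀ β) (α k) (hαpos k)
      exact ⟨M, h1, h2, h3, (sep_finite hcnt (hαpos k) (hαle k) x₀ h1 h2).1⟩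
    choose M hM1 hM2 hM3 hM4 using hMex
    classical
    set F : ℕ → Finset X := fun k => (hM4 k).toFinset with hF
    have hcard : ∀ k, ((F k).card : ℝ) ≤ C * (β / α k) ^ s := by
      intro k
      exact (sep_finite hcnt (hαpos k) (hαle k) x₀ (hM1 k) (hM2 k)).2 (F k)
        (by simp [hF, Set.Finite.coe_toFinset])
    have hle := MeasureTheory.Measure.hausdorffMeasure_le_liminf_sum (l := (atTop : Filter ℕ)) d (closedBall x₀ β)
        (fun k => 2 * ENNReal.ofReal (α k))
        (by
          have h1 : Filter.Tendsto (fun k : ℕ => α k) atTop (nhds 0) := by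
            simpa [hα] using (tendsto_pow_atTop_nhds_zero_of_lt_one
              (by norm_num : (0:ℝ) ≤ q) (by norm_num : q < 1)).const_mul β
          have h2 : Filter.Tendsto (fun k => (2:ℝ≥0∞) * ENNReal.ofReal (α k)) atTop
              (nhds (2 * ENNReal.ofReal 0)) :=
            ENNReal.Tendsto.const_mul (ENNReal.tendsto_ofReal h1) (Or.inr (by norm_num))
          simpa using h2)
        (fun k (p : F k) => ball (p : X) (α k))
        (Filter.Eventually.of_forall (fun k i => by
          show EMetric.diam (ball ((i : X)) (α k)) ≤ 2 * ENNReal.ofReal (α k)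
          rw [← Metric.emetric_ball]
          exact EMetric.diam_ball))
        (Filter.Eventually.of_forall (fun k => by
          intro y hy
          obtain ⟨p, hp, hyp⟩ := mem_iUnion₂.mp (hM3 k hy)
          exact mem_iUnion.mpr ⟨⟨p, by simp [hF, (hM4 k).mem_toFinset, hp]⟩, hyp⟩))
    -- bound the sums
    set c : ℕ → ℝ≥0∞ :=
      fun k => ENNReal.ofReal ((C * (2*β) ^ d) * ((2:ℝ) ^ (s - d)) ^ k) with hc
    have hbk : ∀ k, (∑ i : F k, EMetric.diam (ball ((i : X)) (α k)) ^ d) ≤ c k := by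
      intro k
      have hsum : (∑ i : F k, EMetric.diam (ball ((i : X)) (α k)) ^ d)
          ≤ (Finset.univ : Finset (F k)).card • ((2 * ENNReal.ofReal (α k)) ^ d) := by
        apply Finset.sum_le_card_nsmul
        intro i _
        apply ENNReal.rpow_le_rpow _ (le_of_lt hd0)
        rw [← Metric.emetric_ball]
        exact EMetric.diam_ball
      rw [Finset.card_univ, Fintype.card_coe, nsmul_eq_mul] at hsum
      refine le_trans hsum ?_
      have h2 : (2 * ENNReal.ofReal (α k)) ^ d = ENNReal.ofReal ((2 * α k) ^ d) := by
        rw [← ENNReal.ofReal_ofNat, ← ENNReal.ofReal_mul (by norm_num)]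
        rw [← ENNReal.ofReal_rpow_of_pos (mul_pos two_pos (hαpos k))]
      have h3 : ((F k).card : ℝ≥0∞) ≤ ENNReal.ofReal (C * (β / α k) ^ s) := by
        rw [← ENNReal.ofReal_natCast]
        exact ENNReal.ofReal_le_ofReal (hcard k)
      rw [h2]
      refine le_trans (mul_le_mul_left h3 _) ?_
      rw [← ENNReal.ofReal_mul (mul_nonneg hC
        (Real.rpow_nonneg (div_nonneg hβ.le (hαpos k).le) s))]
      apply ENNReal.ofReal_le_ofReal
      -- real computation
      have hαk' : α k = β * (2:ℝ)⁻¹ ^ k := rfl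
      have h2kne : ((2:ℝ) ^ k) ≠ 0 := by positivity
      have hqk : (β / α k) = (2:ℝ) ^ k := by
        rw [hαk', inv_pow]
        field_simp
      have hk : ((2:ℝ)⁻¹) ^ k = (2:ℝ) ^ (-(k:ℝ)) := by
        rw [Real.rpow_neg (by norm_num), Real.rpow_natCast, inv_pow]
      have e1 : (β / α k) ^ s = (2:ℝ) ^ ((k : ℝ) * s) := by
        rw [hqk, ← Real.rpow_natCast 2 k, ← Real.rpow_mul (by norm_num)]
      have e2 : (2 * α k) ^ d = (2*β) ^ d * (2:ℝ) ^ (-(k:ℝ) * d) := by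
        have h2αk : 2 * α k = (2 * β) * (2:ℝ) ^ (-(k:ℝ)) := by
          rw [hαk', hk]; ring
        rw [h2αk, Real.mul_rpow (by positivity)
          (le_of_lt (Real.rpow_pos_of_pos two_pos _)), ← Real.rpow_mul (by norm_num)]
      have e3 : ((2:ℝ) ^ (s - d)) ^ k = (2:ℝ) ^ ((k:ℝ) * s) * (2:ℝ) ^ (-(k:ℝ) * d) := by
        rw [← Real.rpow_natCast ((2:ℝ) ^ (s-d)) k, ← Real.rpow_mul (by norm_num),
          ← Real.rpow_add (by norm_num : (0:ℝ) < 2)]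
        congr 1
        ring
      refine le_of_eq ?_
      rw [e1, e2, e3]
      ring
    have hctend : Filter.Tendsto c atTop (nhds 0) := by
      have hρ0 : (0:ℝ) ≤ (2:ℝ) ^ (s - d) := le_of_lt (Real.rpow_pos_of_pos (by norm_num) _)
      have hρ1 : (2:ℝ) ^ (s - d) < 1 :=
        Real.rpow_lt_one_of_one_lt_of_neg (by norm_num) (by linarith)
      have h1 : Filter.Tendsto (fun k : ℕ => (C * (2*β) ^ d) * ((2:ℝ) ^ (s - d)) ^ k)
          atTop (nhds 0) := by
        simpa using (tendsto_pow_atTop_nhds_zero_of_lt_one hρ0 hρ1).const_mul (C * (2*β) ^ d)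
      simpa [hc] using ENNReal.tendsto_ofReal h1
    have hliminf : Filter.liminf
        (fun k => ∑ i : F k, EMetric.diam (ball ((i : X)) (α k)) ^ d) atTop = 0 := by
      apply le_antisymm _ (zero_le')
      calc Filter.liminf _ atTop ≤ Filter.liminf c atTop :=
            Filter.liminf_le_liminf (Filter.Eventually.of_forall hbk)
        _ = 0 := hctend.liminf_eq
    rw [← le_zero_iff, ← hliminf]
    exact hle

lemma univ_null (hcnt : AssouadCnt X s C) (hC : 0 ≤ C) {d : ℝ} (hs0 : 0 ≤ s) (hd : s < d) :
    μH[d] (univ : Set X) = 0 := by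
  rcases isEmpty_or_nonempty X with hX | hX
  · simp [Set.univ_eq_empty_iff.mpr hX]
  · obtain ⟨x₀⟩ := hX
    have : (univ : Set X) = ⋃ m : ℕ, closedBall x₀ m := by
      ext y
      simp only [mem_univ, mem_iUnion, mem_closedBall, true_iff]
      obtain ⟨m, hm⟩ := exists_nat_ge (dist y x₀)
      exact ⟨m, hm⟩
    rw [this]
    exact measure_iUnion_null fun m => ball_null hcnt hC hs0 hd x₀ m

lemma assouad_totallyBounded (hcnt : AssouadCnt X s C) (x₀ : X) (R : ℝ) :
    TotallyBounded (closedBall x₀ R) := by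
  rw [Metric.totallyBounded_iff]
  intro ε hε
  rcases le_or_gt R 0 with hR | hR
  · refine ⟨{x₀}, finite_singleton _, ?_⟩
    intro y hy
    rcases lt_or_eq_of_le hR with h | h
    · exact absurd hy (by simp [closedBall_eq_empty.mpr h])
    · subst h
      simp only [mem_closedBall] at hy
      have : y = x₀ := by
        have := dist_nonneg (x := y) (y := x₀); have : dist y x₀ = 0 := le_antisymm hy this
        exact dist_eq_zero.mp this
      subst this
      simp [mem_ball, hε]
  · set α := min ε R with hαdef
    have hα : 0 < α := lt_min hε hR
    obtain ⟨M, hMA, hMsep, hMcov⟩ := exists_maximal_separated (closedBall x₀ R) α hα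
    have hfin := (sep_finite hcnt hα (min_le_right _ _) x₀ hMA hMsep).1
    refine ⟨M, hfin, ?_⟩
    intro y hy
    obtain ⟨p, hp, hyp⟩ := mem_iUnion₂.mp (hMcov hy)
    exact mem_iUnion₂.mpr ⟨p, hp, ball_subset_ball (min_le_left _ _) hyp⟩

lemma assouad_secondCountable (hcnt : AssouadCnt X s C) :
    SecondCountableTopology X := by
  have hsep : TopologicalSpace.IsSeparable (univ : Set X) := by
    rcases isEmpty_or_nonempty X with hX | hX
    · rw [Set.univ_eq_empty_iff.mpr hX]
      exact Set.Countable.isSeparable (countable_empty)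
    · obtain ⟨x₀⟩ := hX
      have : (univ : Set X) = ⋃ m : ℕ, closedBall x₀ m := by
        ext y
        simp only [mem_univ, mem_iUnion, mem_closedBall, true_iff]
        obtain ⟨m, hm⟩ := exists_nat_ge (dist y x₀)
        exact ⟨m, hm⟩
      rw [this]
      exact TopologicalSpace.IsSeparable.iUnion fun m => (assouad_totallyBounded hcnt x₀ m).isSeparable
  have : TopologicalSpace.SeparableSpace X := TopologicalSpace.isSeparable_univ_iff.mp hsep
  exact UniformSpace.secondCountable_of_separable X

/-- Eilenberg-type slicing: if `μH[d] X = 0` then almost every sphere has zero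
`μH[d-1]` measure. -/
lemma slicing {d : ℝ} (hd : 1 ≤ d) (x₀ : X) (h : μH[d] (univ : Set X) = 0) :
    ∀ᵐ r ∂(volume : Measure ℝ), μH[d-1] (Metric.sphere x₀ r) = 0 := by
  classical
  have hd0 : (0:ℝ) < d := lt_of_lt_of_le one_pos hd
  set δ : ℕ → ℝ≥0∞ := fun k => ENNReal.ofReal ((k+1:ℝ))⁻¹ with hδ
  have hδpos : ∀ k, 0 < δ k := fun k => ENNReal.ofReal_pos.mpr (by positivity)
  have hδne : ∀ k, δ k ≠ ∞ := fun k => ENNReal.ofReal_ne_top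
  have hδ0 : Filter.Tendsto δ atTop (nhds 0) := by
    have h1 : Filter.Tendsto (fun k : ℕ => ((k+1:ℝ))⁻¹) atTop (nhds 0) := by
      simpa [one_div] using tendsto_one_div_add_atTop_nhds_zero_nat (𝕜 := ℝ)
    simpa using ENNReal.tendsto_ofReal h1
  -- extract efficient covers at every scale
  have hcov : ∀ k : ℕ, ∃ t : ℕ → Set X, ∃ _ : ((univ : Set X) ⊆ ⋃ n, t n),
      ∃ _ : (∀ n, EMetric.diam (t n) ≤ δ k),
      (∑' n, ⨆ _ : (t n).Nonempty, EMetric.diam (t n) ^ d) < (2⁻¹ : ℝ≥0∞) ^ k := by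
    intro k
    rw [MeasureTheory.Measure.hausdorffMeasure_apply] at h
    have h2 : (⨅ (t : ℕ → Set X) (_ : (univ : Set X) ⊆ ⋃ n, t n)
        (_ : ∀ n, EMetric.diam (t n) ≤ δ k),
        ∑' n, ⨆ _ : (t n).Nonempty, EMetric.diam (t n) ^ d) = 0 := by
      refine le_antisymm ?_ (zero_le')
      rw [← h]
      exact le_iSup₂ (f := fun (r : ℝ≥0∞) (_ : 0 < r) =>
        ⨅ (t : ℕ → Set X) (_ : (univ : Set X) ⊆ ⋃ n, t n)
          (_ : ∀ n, EMetric.diam (t n) ≤ r),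
          ∑' n, ⨆ _ : (t n).Nonempty, EMetric.diam (t n) ^ d) (δ k) (hδpos k)
    have h4 : (⨅ (t : ℕ → Set X) (_ : (univ : Set X) ⊆ ⋃ n, t n)
        (_ : ∀ n, EMetric.diam (t n) ≤ δ k),
        ∑' n, ⨆ _ : (t n).Nonempty, EMetric.diam (t n) ^ d) < (2⁻¹ : ℝ≥0∞) ^ k := by
      rw [h2]
      exact ENNReal.pow_pos (ENNReal.inv_pos.mpr (by norm_num)) k
    simpa only [iInf_lt_iff] using h4
  choose t ht1 ht2 ht3 using hcov
  have htne : ∀ k n, EMetric.diam (t k n) ≠ ∞ :=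
    fun k n => ne_top_of_le_ne_top (hδne k) (ht2 k n)
  set J : ℕ → ℕ → Set ℝ := fun k n =>
    if hn : (t k n).Nonempty then
      Icc (dist hn.some x₀ - (EMetric.diam (t k n)).toReal)
        (dist hn.some x₀ + (EMetric.diam (t k n)).toReal)
    else ∅ with hJ
  set c : ℕ → ℕ → ℝ≥0∞ := fun k n =>
    if (t k n).Nonempty then EMetric.diam (t k n) ^ (d-1) else 0 with hc
  set F : ℕ → ℝ → ℝ≥0∞ := fun k r => ∑' n, (J k n).indicator (fun _ => c k n) r with hF
  have hJmeas : ∀ k n, MeasurableSet (J k n) := by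
    intro k n
    simp only [hJ]
    split
    · exact measurableSet_Icc
    · exact MeasurableSet.empty
  have hFmeas : ∀ k, Measurable (F k) := fun k =>
    Measurable.ennreal_tsum (fun n => Measurable.indicator measurable_const (hJmeas k n))
  have hterm : ∀ k n, c k n * volume (J k n)
      ≤ 2 * (⨆ _ : (t k n).Nonempty, EMetric.diam (t k n) ^ d) := by
    intro k n
    by_cases hn : (t k n).Nonempty
    · have hcval : c k n = EMetric.diam (t k n) ^ (d-1) := if_pos hn
      have hJval : J k n =
          Icc (dist hn.some x₀ - (EMetric.diam (t k n)).toReal)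
            (dist hn.some x₀ + (EMetric.diam (t k n)).toReal) := dif_pos hn
      have hvol : volume (J k n) = 2 * EMetric.diam (t k n) := by
        rw [hJval, Real.volume_Icc]
        have : dist hn.some x₀ + (EMetric.diam (t k n)).toReal -
            (dist hn.some x₀ - (EMetric.diam (t k n)).toReal)
            = 2 * (EMetric.diam (t k n)).toReal := by ring
        rw [this, ENNReal.ofReal_mul (by norm_num), ENNReal.ofReal_toReal (htne k n),
          ENNReal.ofReal_ofNat]
      rw [hcval, hvol, iSup_pos hn]
      rw [show EMetric.diam (t k n) ^ (d - 1) * (2 * EMetric.diam (t k n))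
        = 2 * (EMetric.diam (t k n) ^ (d-1) * EMetric.diam (t k n)) by ring]
      apply mul_le_mul_right
      rcases eq_or_ne (EMetric.diam (t k n)) 0 with h0 | h0
      · rw [h0, mul_zero]
        exact zero_le'
      · refine le_of_eq ?_
        calc EMetric.diam (t k n) ^ (d-1) * EMetric.diam (t k n)
            = EMetric.diam (t k n) ^ (d-1) * EMetric.diam (t k n) ^ (1:ℝ) := by
              rw [ENNReal.rpow_one]
          _ = EMetric.diam (t k n) ^ (d-1+1) := (ENNReal.rpow_add _ _ h0 (htne k n)).symm
          _ = EMetric.diam (t k n) ^ d := by norm_num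
    · have hcval : c k n = 0 := if_neg hn
      rw [hcval, zero_mul]
      exact zero_le'
  have hFint : ∀ k, (∫⁻ r, F k r) ≤ 2 * (2⁻¹ : ℝ≥0∞) ^ k := by
    intro k
    have h1 : (∫⁻ r, F k r) = ∑' n, c k n * volume (J k n) := by
      rw [hF]
      rw [MeasureTheory.lintegral_tsum
        (fun n => (Measurable.indicator measurable_const (hJmeas k n)).aemeasurable)]
      exact tsum_congr fun n => MeasureTheory.lintegral_indicator_const (hJmeas k n) _
    rw [h1]
    calc ∑' n, c k n * volume (J k n)
        ≤ ∑' n, 2 * (⨆ _ : (t k n).Nonempty, EMetric.diam (t k n) ^ d) :=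
          ENNReal.tsum_le_tsum (hterm k)
      _ = 2 * ∑' n, (⨆ _ : (t k n).Nonempty, EMetric.diam (t k n) ^ d) :=
          ENNReal.tsum_mul_left
      _ ≤ 2 * (2⁻¹ : ℝ≥0∞) ^ k := mul_le_mul_right (le_of_lt (ht3 k)) 2
  have hGne : (∫⁻ r, ∑' k, F k r) ≠ ∞ := by
    have h1 : (∫⁻ r, ∑' k, F k r) = ∑' k, ∫⁻ r, F k r :=
      MeasureTheory.lintegral_tsum (fun k => (hFmeas k).aemeasurable)
    rw [h1]
    have h2 : ∑' k, (∫⁻ r, F k r) ≤ ∑' k : ℕ, 2 * (2⁻¹ : ℝ≥0∞) ^ k :=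
      ENNReal.tsum_le_tsum hFint
    refine ne_top_of_le_ne_top ?_ h2
    rw [ENNReal.tsum_mul_left, ENNReal.tsum_geometric]
    apply ENNReal.mul_ne_top (by norm_num)
    rw [ENNReal.inv_ne_top]
    have : (2⁻¹ : ℝ≥0∞) < 1 := by norm_num
    exact ne_of_gt (tsub_pos_of_lt this)
  have hae := MeasureTheory.ae_lt_top (Measurable.ennreal_tsum hFmeas) hGne
  filter_upwards [hae] with r hr
  have htend : Filter.Tendsto (fun k => F k r) atTop (nhds 0) := by
    have h5 := ENNReal.tendsto_cofinite_zero_of_tsum_ne_top (ne_of_lt hr)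
    rwa [Nat.cofinite_eq_atTop] at h5
  refine le_antisymm ?_ (zero_le')
  set Hit : ℕ → Set ℕ := fun k => {n : ℕ | (t k n ∩ Metric.sphere x₀ r).Nonempty} with hHit
  have hslice := MeasureTheory.Measure.hausdorffMeasure_le_liminf_tsum
    (ι := fun k : ℕ => ↥(Hit k))
    (d-1) (Metric.sphere x₀ r) (l := atTop) δ hδ0
    (fun k i => t k i.1)
    (Filter.Eventually.of_forall fun k i => ht2 k i.1)
    (Filter.Eventually.of_forall fun k => by
      intro y hy
      obtain ⟨n, hn⟩ := mem_iUnion.mp (ht1 k (mem_univ y))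
      exact mem_iUnion.mpr ⟨⟨n, ⟨y, hn, hy⟩⟩, hn⟩)
  refine le_trans hslice ?_
  have hbd : ∀ k, (∑' i : ↥(Hit k),
      EMetric.diam (t k i.1) ^ (d-1)) ≤ F k r := by
    intro k
    rw [tsum_subtype (Hit k) (fun n => EMetric.diam (t k n) ^ (d-1))]
    apply ENNReal.tsum_le_tsum
    intro n
    by_cases hhit : (t k n ∩ Metric.sphere x₀ r).Nonempty
    · have hn : (t k n).Nonempty := hhit.mono inter_subset_left
      have hval1 : Set.indicator (Hit k)
          (fun n => EMetric.diam (t k n) ^ (d-1)) n = EMetric.diam (t k n) ^ (d-1) :=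
        Set.indicator_of_mem (show n ∈ Hit k from hhit) _
      obtain ⟨y, hyt, hys⟩ := hhit
      have hyr : dist y x₀ = r := hys
      have hdy : dist y hn.some ≤ (EMetric.diam (t k n)).toReal := by
        rw [dist_edist]
        exact ENNReal.toReal_mono (htne k n)
          (EMetric.edist_le_diam_of_mem hyt hn.some_mem)
      have hrJ : r ∈ J k n := by
        rw [hJ]
        simp only [dif_pos hn, mem_Icc]
        have habs : |dist y x₀ - dist hn.some x₀| ≤ dist y hn.some := abs_dist_sub_le _ _ _
        rw [hyr] at habs
        rw [abs_le] at habs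
        constructor <;> linarith [habs.1, habs.2, hdy]
      have hval2 : (J k n).indicator (fun _ => c k n) r = c k n :=
        Set.indicator_of_mem hrJ _
      rw [hval1, hval2, hc]
      simp only [if_pos hn]
      exact le_refl _
    · rw [Set.indicator_of_notMem (show n ∉ Hit k from hhit)]
      exact zero_le'
  calc Filter.liminf (fun k => ∑' i : ↥(Hit k),
        EMetric.diam (t k i.1) ^ (d-1)) atTop
      ≤ Filter.liminf (fun k => F k r) atTop :=
        Filter.liminf_le_liminf (Filter.Eventually.of_forall hbd)
    _ = 0 := htend.liminf_eq

/-- Swelling of a family of subsets of `Z` to open subsets of `X`, controlling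
intersections. -/
lemma swell {Z : Set X} {κ' : Type} (G : κ' → Set X) (ρ : κ' → ℝ)
    (hρ : ∀ t, 0 < ρ t) (hGZ : ∀ t, G t ⊆ Z)
    (hop : ∀ t, ∀ z ∈ G t, ∃ ε > 0, ∀ z' ∈ Z, dist z z' < ε → z' ∈ G t) :
    ∃ V : κ' → Set X, (∀ t, IsOpen (V t)) ∧ (∀ t, G t ⊆ V t) ∧
      (∀ t x, x ∈ V t → ∃ z ∈ G t, dist x z < ρ t) ∧
      (∀ (x : X) (T : Finset κ'), T.Nonempty → (∀ t ∈ T, x ∈ V t) →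
        ∃ z ∈ Z, ∀ t ∈ T, z ∈ G t) := by
  classical
  refine ⟨fun t => {x | EMetric.infEdist x (G t) <
      min (ENNReal.ofReal (ρ t)) (EMetric.infEdist x (Z \ G t) / 3)}, ?_, ?_, ?_, ?_⟩
  · intro t
    exact isOpen_lt EMetric.continuous_infEdist (continuous_const.min
      ((ENNReal.continuous_div_const 3 (by norm_num)).comp EMetric.continuous_infEdist))
  · intro t z hz
    have h0 : EMetric.infEdist z (G t) = 0 := EMetric.infEdist_zero_of_mem hz
    obtain ⟨ε, hε, hεin⟩ := hop t z hz
    have h1 : ENNReal.ofReal ε ≤ EMetric.infEdist z (Z \ G t) := by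
      refine EMetric.le_infEdist.mpr ?_
      intro y hy
      by_contra hlt
      exact hy.2 (hεin y hy.1 (edist_lt_ofReal.mp (not_le.mp hlt)))
    have h2 : (0 : ℝ≥0∞) < EMetric.infEdist z (Z \ G t) / 3 :=
      ENNReal.div_pos (ne_of_gt (lt_of_lt_of_le (ENNReal.ofReal_pos.mpr hε) h1)) (by norm_num)
    exact mem_setOf.mpr (h0 ▸ lt_min (ENNReal.ofReal_pos.mpr (hρ t)) h2)
  · intro t x hx
    obtain ⟨z, hzG, hz⟩ := EMetric.infEdist_lt_iff.mp hx
    exact ⟨z, hzG, edist_lt_ofReal.mp (lt_of_lt_of_le hz (min_le_left _ _))⟩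
  · intro x T hTne hT
    have hz : ∀ t ∈ T, ∃ z ∈ G t, edist x z <
        min (ENNReal.ofReal (ρ t)) (EMetric.infEdist x (Z \ G t) / 3) := fun t ht =>
      EMetric.infEdist_lt_iff.mp (hT t ht)
    choose zf hzf1 hzf2 using hz
    obtain ⟨t₀, ht₀, hmin⟩ := T.attach.exists_min_image (fun t => edist x (zf t.1 t.2))
      (hTne.attach)
    refine ⟨zf t₀.1 t₀.2, hGZ t₀.1 (hzf1 t₀.1 t₀.2), ?_⟩
    intro t ht
    by_contra hzG
    have h1 : EMetric.infEdist x (Z \ G t) ≤ edist x (zf t₀.1 t₀.2) :=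
      EMetric.infEdist_le_edist_of_mem ⟨hGZ t₀.1 (hzf1 t₀.1 t₀.2), hzG⟩
    have h3 : edist x (zf t ht) < EMetric.infEdist x (Z \ G t) / 3 :=
      lt_of_lt_of_le (hzf2 t ht) (min_le_right _ _)
    have h4 : EMetric.infEdist x (Z \ G t) / 3 ≤ EMetric.infEdist x (Z \ G t) :=
      ENNReal.div_le_of_le_mul (le_mul_of_one_le_right (zero_le') (by norm_num))
    have h2 := hmin ⟨t, ht⟩ (T.mem_attach _)
    exact absurd (((h1.trans h2).trans_lt h3).trans_le h4) (lt_irrefl _)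

end Aux

section Key

universe u

/-- Key inductive construction: a metric space with vanishing `n`-dimensional Hausdorff
measure admits, for every Lipschitz-type scale function `f`, an open cover of
multiplicity at most `n` by sets small relative to `f`. -/
lemma keyP : ∀ (n : ℕ) (X : Type u) [MetricSpace X] [MeasurableSpace X] [BorelSpace X]
    [SecondCountableTopology X]
    (f : X → ℝ), (∀ x, 0 < f x) → (∀ x y, f x ≤ f y + dist x y) →
    μH[(n : ℝ)] (univ : Set X) = 0 →
    ∃ (κ : Type) (V : κ → Set X), (∀ k, IsOpen (V k)) ∧ (⋃ k, V k) = univ ∧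
      (∀ k, ∃ y, V k ⊆ ball y (f y / 2)) ∧
      ∀ x : X, {k | x ∈ V k}.Finite ∧ {k | x ∈ V k}.ncard ≤ n := by
  intro n
  induction n with
  | zero =>
    intro X _ _ _ _ f hf0 hflip hH
    norm_num at hH
    have hempty : IsEmpty X := by
      by_contra hne
      rw [not_isEmpty_iff] at hne
      obtain ⟨x⟩ := hne
      have h1 : μH[(0:ℝ)] ({x} : Set X) = 1 :=
        MeasureTheory.Measure.hausdorffMeasure_zero_singleton x
      have h2 : μH[(0:ℝ)] ({x} : Set X) ≤ 0 := hH ▸ measure_mono (subset_univ _)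
      rw [h1] at h2
      exact absurd h2 (by norm_num)
    refine ⟨Empty, fun k => k.elim, fun k => k.elim, ?_, fun k => k.elim,
      fun x => (hempty.false x).elim⟩
    rw [Set.univ_eq_empty_iff.mpr hempty]
    exact iUnion_of_empty _
  | succ n IH =>
    intro X _ _ _ _ f hf0 hflip hH
    classical
    rcases isEmpty_or_nonempty X with hempty | hne
    · refine ⟨Empty, fun k => k.elim, fun k => k.elim, ?_, fun k => k.elim,
        fun x => (hempty.false x).elim⟩
      rw [Set.univ_eq_empty_iff.mpr hempty]
      exact iUnion_of_empty _
    obtain ⟨u, hu⟩ := TopologicalSpace.exists_dense_seq X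
    have hcast : ((n+1:ℕ):ℝ) - 1 = (n:ℝ) := by push_cast; ring
    have hrad : ∀ k : ℕ, ∃ rk : ℝ, rk ∈ Icc (f (u k)/20) (f (u k)/10) ∧
        μH[(n:ℝ)] (Metric.sphere (u k) rk) = 0 := by
      intro k
      have hsl := slicing (d := ((n+1:ℕ):ℝ))
        (by push_cast; linarith [Nat.cast_nonneg (α := ℝ) n]) (u k) hH
      rw [hcast] at hsl
      by_contra hno
      push_neg at hno
      have hsub : Icc (f (u k)/20) (f (u k)/10) ⊆
          {r : ℝ | ¬ μH[(n:ℝ)] (Metric.sphere (u k) r) = 0} := fun r hr => hno r hr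
      have hnull : volume {r : ℝ | ¬ μH[(n:ℝ)] (Metric.sphere (u k) r) = 0} = 0 :=
        MeasureTheory.ae_iff.mp hsl
      have hz := measure_mono_null hsub hnull
      rw [Real.volume_Icc, ENNReal.ofReal_eq_zero] at hz
      have := hf0 (u k)
      linarith
    choose rad hrad1 hrad2 using hrad
    have hrpos : ∀ k, 0 < rad k := fun k =>
      lt_of_lt_of_le (by linarith [hf0 (u k)] : (0:ℝ) < f (u k)/20) (hrad1 k).1
    set O : ℕ → Set X := fun k => ball (u k) (rad k) \ (⋃ j, ⋃ (_ : j < k),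
      closedBall (u j) (rad j)) with hO
    have hOopen : ∀ k, IsOpen (O k) := by
      intro k
      apply IsOpen.sdiff isOpen_ball
      exact Set.Finite.isClosed_biUnion (Set.finite_Iio k) (fun j _ => Metric.isClosed_closedBall)
    have hcov : ∀ y : X, ∃ k, y ∈ ball (u k) (rad k) := by
      intro y
      obtain ⟨k, hk⟩ := Metric.denseRange_iff.mp hu y (f y / 25) (by linarith [hf0 y])
      refine ⟨k, ?_⟩
      rw [mem_ball]
      have h1 : f y - f y / 25 ≤ f (u k) := by
        have h2 := hflip y (u k)
        linarith
      have h3 : f (u k) / 20 ≤ rad k := (hrad1 k).1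
      have h0 := hf0 y
      calc dist y (u k) < f y / 25 := hk
        _ ≤ (f y - f y / 25) / 20 := by linarith
        _ ≤ f (u k) / 20 := by linarith
        _ ≤ rad k := h3
    have hcovC : ∀ y : X, ∃ k, y ∈ closedBall (u k) (rad k) :=
      fun y => (hcov y).imp (fun k hk => ball_subset_closedBall hk)
    set Z : Set X := ⋃ k, Metric.sphere (u k) (rad k) with hZ
    have hZnull : μH[(n:ℝ)] Z = 0 := measure_iUnion_null hrad2
    have hOZcov : ∀ y : X, y ∉ Z → ∃ k, y ∈ O k := by
      intro y hy
      have hex := hcovC y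
      refine ⟨Nat.find hex, ?_, ?_⟩
      · have hkmem : y ∈ closedBall (u (Nat.find hex)) (rad (Nat.find hex)) :=
          Nat.find_spec hex
        rw [mem_closedBall] at hkmem
        rcases lt_or_eq_of_le hkmem with h | h
        · exact mem_ball.mpr h
        · exact absurd (mem_iUnion.mpr ⟨Nat.find hex, Metric.mem_sphere.mpr h⟩) hy
      · intro hmem
        simp only [mem_iUnion] at hmem
        obtain ⟨j, hj, hyj⟩ := hmem
        exact Nat.find_min hex hj hyj
    have hOdisj : ∀ j k, j ≠ k → ∀ y, y ∈ O j → y ∈ O k → False := by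
      have key : ∀ j k, j < k → ∀ y, y ∈ O j → y ∈ O k → False := by
        intro j k hjk y hyj hyk
        apply hyk.2
        simp only [mem_iUnion]
        exact ⟨j, hjk, ball_subset_closedBall hyj.1⟩
      intro j k hjk y hyj hyk
      rcases lt_or_gt_of_ne hjk with h | h
      · exact key j k h y hyj hyk
      · exact key k j h y hyk hyj
    -- pass to the subtype Z
    have hiso : Isometry ((↑) : ↥Z → X) := isometry_subtype_coe
    have himg := hiso.hausdorffMeasure_image (d := (n:ℝ))
      (Or.inl (Nat.cast_nonneg n)) (univ : Set ↥Z)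
    have himg2 : ((↑) '' (univ : Set ↥Z) : Set X) = Z := by
      rw [image_univ, Subtype.range_coe]
    rw [himg2] at himg
    have hZval : μH[(n:ℝ)] (univ : Set ↥Z) = 0 := by
      rw [← himg]; exact hZnull
    set fZ : ↥Z → ℝ := fun z => f z / 4 with hfZ
    have hfZ0 : ∀ z, 0 < fZ z := fun z => div_pos (hf0 _) (by norm_num)
    have hfZflip : ∀ a b : ↥Z, fZ a ≤ fZ b + dist a b := by
      intro a b
      have h1 := hflip (a:X) (b:X)
      have hd : dist a b = dist (a:X) (b:X) := Subtype.dist_eq a b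
      have hdn : (0:ℝ) ≤ dist (a:X) (b:X) := dist_nonneg
      simp only [hfZ]
      rw [hd]
      linarith
    obtain ⟨κ', W, hWopen, hWcov, hWsmall, hWmult⟩ := IH (↥Z) fZ hfZ0 hfZflip hZval
    set G : κ' → Set X := fun t' => ((↑) : ↥Z → X) '' (W t') with hG
    have hGZ : ∀ t', G t' ⊆ Z := by
      rintro t' _ ⟨w, _, rfl⟩; exact w.2
    have hop : ∀ t', ∀ z ∈ G t', ∃ ε > 0, ∀ z' ∈ Z, dist z z' < ε → z' ∈ G t' := by
      intro t' z hz
      obtain ⟨w, hw, rfl⟩ := hz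
      obtain ⟨Ow, hOw, hOweq⟩ := isOpen_induced_iff.mp (hWopen t')
      have hwO : (w : X) ∈ Ow := by
        rw [← hOweq] at hw; exact hw
      obtain ⟨ε, hε, hball⟩ := Metric.isOpen_iff.mp hOw _ hwO
      refine ⟨ε, hε, ?_⟩
      intro z' hz' hdist
      have hz'O : z' ∈ Ow := hball (mem_ball.mpr (by rwa [dist_comm]))
      refine ⟨⟨z', hz'⟩, ?_, rfl⟩
      rw [← hOweq]
      exact hz'O
    choose yc hyc using hWsmall
    set ρ : κ' → ℝ := fun t' => f (yc t') / 8 with hρdef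
    have hρ : ∀ t', 0 < ρ t' := fun t' => div_pos (hf0 _) (by norm_num)
    obtain ⟨VG, hVGopen, hVGsub, hVGnear, hVGmult⟩ := swell G ρ hρ hGZ hop
    have hVGsmall : ∀ t', VG t' ⊆ ball ((yc t' : X)) (f (yc t') / 2) := by
      intro t' x hx
      obtain ⟨z, hzG, hdz⟩ := hVGnear t' x hx
      obtain ⟨w, hw, rfl⟩ := hzG
      have h1 : dist w (yc t') < fZ (yc t') / 2 := hyc t' hw
      have h2 : dist (w:X) ((yc t'):X) = dist w (yc t') := (Subtype.dist_eq w (yc t')).symm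
      rw [mem_ball]
      have h3 : dist x ((yc t'):X) ≤ dist x (w:X) + dist (w:X) ((yc t'):X) :=
        dist_triangle _ _ _
      simp only [hfZ] at h1
      simp only [hρdef] at hdz
      rw [h2] at h3
      have h4 := hf0 ((yc t') : X)
      linarith
    refine ⟨ℕ ⊕ κ', Sum.elim O VG, ?_, ?_, ?_, ?_⟩
    · rintro (k | t')
      exacts [hOopen k, hVGopen t']
    · rw [eq_univ_iff_forall]
      intro x
      rw [mem_iUnion]
      by_cases hxZ : x ∈ Z
      · obtain ⟨t', ht'⟩ := mem_iUnion.mp (eq_univ_iff_forall.mp hWcov (⟨x, hxZ⟩ : ↥Z))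
        exact ⟨Sum.inr t', hVGsub t' ⟨⟨x, hxZ⟩, ht', rfl⟩⟩
      · obtain ⟨k, hk⟩ := hOZcov x hxZ
        exact ⟨Sum.inl k, hk⟩
    · rintro (k | t')
      · refine ⟨u k, fun y hy => ?_⟩
        have h1 : y ∈ ball (u k) (rad k) := hy.1
        refine ball_subset_ball ?_ h1
        have := hf0 (u k)
        have h2 := (hrad1 k).2
        linarith
      · exact ⟨(yc t' : X), hVGsmall t'⟩
    · intro x
      have hA : {k : ℕ | x ∈ O k}.Subsingleton := by
        intro a ha b hb
        by_contra hab
        exact hOdisj a b hab x ha hb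
      obtain ⟨hAfin, hAcard⟩ := aux_subsingleton_ncard hA
      obtain ⟨hBfin, hBcard⟩ := aux_finite_ncard {t' | x ∈ VG t'} n (by
        intro T hT
        rcases T.eq_empty_or_nonempty with rfl | hTne
        · simp
        · obtain ⟨z, hzZ, hzG⟩ := hVGmult x T hTne (fun t ht => hT ht)
          have hsub2 : ↑T ⊆ {t' | (⟨z, hzZ⟩ : ↥Z) ∈ W t'} := by
            intro t ht
            obtain ⟨w, hw, hweq⟩ := hzG t ht
            have hwz : w = (⟨z, hzZ⟩ : ↥Z) := Subtype.ext hweq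
            rw [hwz] at hw
            exact hw
          obtain ⟨hfinW, hcardW⟩ := hWmult (⟨z, hzZ⟩ : ↥Z)
          calc T.card = (↑T : Set κ').ncard := (Set.ncard_coe_finset T).symm
            _ ≤ _ := Set.ncard_le_ncard hsub2 hfinW
            _ ≤ n := hcardW)
      have hset : {k : ℕ ⊕ κ' | x ∈ Sum.elim O VG k}
          = Sum.inl '' {k | x ∈ O k} ∪ Sum.inr '' {t' | x ∈ VG t'} := by
        ext (k | t') <;> simp
      constructor
      · rw [hset]
        exact (hAfin.image _).union (hBfin.image _)
      · rw [hset]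
        refine le_trans (Set.ncard_union_le _ _) ?_
        rw [Set.ncard_image_of_injective _ Sum.inl_injective,
          Set.ncard_image_of_injective _ Sum.inr_injective]
        omega

end Key

/-- If a metric space `X` has topological (covering) dimension `n` and finite Assouad
dimension, then `n ≤ dim_A(X)`. -/
theorem covDim_le_assouadDim {X : Type*} [MetricSpace X] (n : ℕ)
    (hdim : CovDimLE X n ∧ ∀ m : ℕ, m < n → ¬ CovDimLE X m)
    (hfin : (AssouadExponents X).Nonempty) :
    (n : ℝ) ≤ sInf (AssouadExponents X) := by
  refine le_csInf hfin ?_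
  intro b hb
  by_contra hnle
  push_neg at hnle
  obtain ⟨hb0, C, hC0, hcnt⟩ := hb
  have hcnt' : AssouadCnt X b C := hcnt
  have hn1 : 1 ≤ n := by
    by_contra hn
    push_neg at hn
    have : n = 0 := by omega
    subst this
    simp only [Nat.cast_zero] at hnle
    linarith
  letI : MeasurableSpace X := borel X
  haveI : BorelSpace X := ⟨rfl⟩
  haveI : SecondCountableTopology X := assouad_secondCountable hcnt'
  have hcd : CovDimLE X (n - 1) := by
    intro ι U hUo hUc
    rcases isEmpty_or_nonempty X with hX | hX
    · refine ⟨Empty, fun k => k.elim, fun k => k.elim, ?_, fun k => k.elim,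
        fun x => (hX.false x).elim⟩
      rw [Set.univ_eq_empty_iff.mpr hX]
      exact iUnion_of_empty _
    by_cases huniv : ∃ i, U i = univ
    · obtain ⟨i0, hi0⟩ := huniv
      refine ⟨Unit, fun _ => univ, fun _ => isOpen_univ, Set.iUnion_const _,
        fun _ => ⟨i0, by rw [hi0]⟩, ?_⟩
      intro x
      have hset : {k : Unit | x ∈ (univ : Set X)} = (univ : Set Unit) := by
        ext k; simp
      rw [hset]
      refine ⟨Set.finite_univ, ?_⟩
      rw [Set.ncard_univ]
      simp
    push_neg at huniv
    obtain ⟨x0⟩ := hX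
    have hx0 : x0 ∈ ⋃ i, U i := hUc ▸ mem_univ x0
    obtain ⟨i0, hi0⟩ := mem_iUnion.mp hx0
    haveI : Nonempty ι := ⟨i0⟩
    set g : X → ι → ℝ := fun x i => min 1 (Metric.infDist x (U i)ᶜ) with hg
    set f : X → ℝ := fun x => ⨆ i, g x i with hf
    have hgbdd : ∀ x : X, BddAbove (range (g x)) := fun x =>
      ⟨1, by rintro _ ⟨i, rfl⟩; exact min_le_left _ _⟩
    have hcompl : ∀ i, ((U i)ᶜ : Set X).Nonempty := fun i => by
      rw [nonempty_compl]; exact huniv i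
    have hf0 : ∀ x, 0 < f x := by
      intro x
      have hx : x ∈ ⋃ i, U i := hUc ▸ mem_univ x
      obtain ⟨i, hi⟩ := mem_iUnion.mp hx
      obtain ⟨ε, hε, hsub⟩ := Metric.isOpen_iff.mp (hUo i) x hi
      have h1 : ε ≤ Metric.infDist x (U i)ᶜ := by
        by_contra hlt2
        push_neg at hlt2
        obtain ⟨y, hy, hdy⟩ := (Metric.infDist_lt_iff (hcompl i)).mp hlt2
        exact hy (hsub (Metric.mem_ball'.mpr hdy))
      have h2 : min 1 ε ≤ g x i := min_le_min le_rfl h1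
      have h3 : g x i ≤ f x := le_ciSup (hgbdd x) i
      have h4 : 0 < min 1 ε := lt_min one_pos hε
      linarith
    have hflip : ∀ x y : X, f x ≤ f y + dist x y := by
      intro x y
      apply ciSup_le
      intro i
      have h1 : g x i ≤ g y i + dist x y := by
        simp only [hg]
        have hd : (0:ℝ) ≤ dist x y := dist_nonneg
        rcases le_total 1 (Metric.infDist y (U i)ᶜ) with hcase | hcase
        · rw [min_eq_left hcase]
          have := min_le_left 1 (Metric.infDist x (U i)ᶜ)
          linarith
        · rw [min_eq_right hcase]
          have h3 := Metric.infDist_le_infDist_add_dist (x := x) (y := y) (s := (U i)ᶜ)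
          have h4 : min 1 (Metric.infDist x (U i)ᶜ) ≤ Metric.infDist x (U i)ᶜ :=
            min_le_right _ _
          linarith
      have h5 : g y i ≤ f y := le_ciSup (hgbdd y) i
      linarith
    have hball : ∀ x, ∃ i, ball x (f x / 2) ⊆ U i := by
      intro x
      have h1 : ∃ i, f x / 2 < g x i := by
        by_contra hno
        push_neg at hno
        have : f x ≤ f x / 2 := ciSup_le hno
        linarith [hf0 x]
      obtain ⟨i, hi⟩ := h1
      refine ⟨i, ?_⟩
      intro y hy
      by_contra hyU
      have h2 : Metric.infDist x (U i)ᶜ ≤ dist x y :=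
        Metric.infDist_le_dist_of_mem hyU
      have h3 : g x i ≤ dist x y := le_trans (min_le_right _ _) h2
      have h4 : dist x y < f x / 2 := by
        rw [dist_comm]; exact mem_ball.mp hy
      linarith
    have hμ : μH[((n:ℕ):ℝ)] (univ : Set X) = 0 := univ_null hcnt' hC0 hb0 hnle
    obtain ⟨κ, V, h1, h2, h3, h4⟩ := keyP n X f hf0 hflip hμ
    refine ⟨κ, V, h1, h2, ?_, ?_⟩
    · intro k
      obtain ⟨y, hy⟩ := h3 k
      obtain ⟨i, hi⟩ := hball y
      exact ⟨i, hy.trans hi⟩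
    · intro x
      refine ⟨(h4 x).1, ?_⟩
      have h5 := (h4 x).2
      omega
  exact hdim.2 (n-1) (by omega) hcd
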